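/- Let V be a 2-dimensional vector space over a field k. The trilinear forms g(a₁,a₂,a₃) = tr(a₁a₂a₃) − tr(a₃a₂a₁) and h(a₁,a₂,a₃) = tr(a₁)tr(a₂)tr(a₃) − tr(a₁a₂a₃) on L(V), viewed as linear forms on L(V)^{⊗3} ≅ L(V^{⊗3}), satisfy h = g ∘ L_{t_{(321)}}, where L_{t_{(321)}} is left-multiplication by the endomorphism t_{(321)} of V^{⊗3} induced by the cyclic permutation (321). -/

import Mathlib

set_option maxHeartbeats 1000000


open TensorProduct

/-- Let `V` be 2-dimensional. The trilinear forms
`g(a₁,a₂,a₃) = tr(a₁a₂a₃) − tr(a₃a₂a₁)` and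
`h(a₁,a₂,a₃) = tr(a₁)tr(a₂)tr(a₃) − tr(a₁a₂a₃)`, viewed as linear forms on
`L(V)^{⊗3} ≅ L(V^{⊗3})`, satisfy `h = g ∘ L_{t_{(321)}}`, where `t_{(321)}` is the
endomorphism of `V^{⊗3}` sending `u₁⊗u₂⊗u₃` to `u₃⊗u₁⊗u₂` and `L` is left
multiplication in `L(V^{⊗3})`. -/
theorem stmt12 (k V : Type*) [Field k] [AddCommGroup V] [Module k V]
    [FiniteDimensional k V] (hdim : Module.finrank k V = 2)
    (T : Module.End k (V ⊗[k] (V ⊗[k] V)))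
    (hT : ∀ u₁ u₂ u₃ : V, T (u₁ ⊗ₜ (u₂ ⊗ₜ u₃)) = u₃ ⊗ₜ (u₁ ⊗ₜ u₂))
    (g h : Module.Dual k (Module.End k (V ⊗[k] (V ⊗[k] V))))
    (hgdef : ∀ a₁ a₂ a₃ : Module.End k V,
      g (TensorProduct.map a₁ (TensorProduct.map a₂ a₃)) =
        LinearMap.trace k V (a₁ * a₂ * a₃) - LinearMap.trace k V (a₃ * a₂ * a₁))
    (hhdef : ∀ a₁ a₂ a₃ : Module.End k V,
      h (TensorProduct.map a₁ (TensorProduct.map a₂ a₃)) =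
        LinearMap.trace k V a₁ * LinearMap.trace k V a₂ * LinearMap.trace k V a₃
          - LinearMap.trace k V (a₁ * a₂ * a₃)) :
    h = g ∘ₗ LinearMap.mulLeft k T := by
  classical
  let b : Module.Basis (Fin 2) k V := Module.finBasisOfFinrankEq k V hdim
  let E : Fin 2 → Fin 2 → Module.End k V := fun p q => (b.coord q).smulRight (b p)
  -- T as a sum of pure tensors
  have hTsum : T = ∑ i : Fin 2, ∑ j : Fin 2, ∑ l : Fin 2,
      TensorProduct.map (E l i) (TensorProduct.map (E i j) (E j l)) := by
    apply (b.tensorProduct (b.tensorProduct b)).ext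
    rintro ⟨p, q, r⟩
    simp only [Module.Basis.tensorProduct_apply', Module.Basis.tensorProduct_apply, hT,
      LinearMap.coe_sum, Finset.sum_apply, TensorProduct.map_tmul, E,
      LinearMap.smulRight_apply, Module.Basis.coord_apply, Module.Basis.repr_self,
      Finsupp.single_apply, Fin.sum_univ_two]
    fin_cases p <;> fin_cases q <;> fin_cases r <;>
      simp [TensorProduct.smul_tmul', TensorProduct.tmul_smul]
  -- trace of E p q * f
  have tr1 : ∀ (p q : Fin 2) (f : Module.End k V),
      LinearMap.trace k V ((E p q) * f) = b.repr (f (b p)) q := by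
    intro p q f
    rw [LinearMap.trace_eq_matrix_trace k b]
    simp only [Matrix.trace, Matrix.diag, LinearMap.toMatrix_apply, Module.End.mul_apply, E,
      LinearMap.smulRight_apply, Module.Basis.coord_apply, map_smul, Module.Basis.repr_self,
      Finsupp.smul_single, smul_eq_mul, mul_one, Finsupp.single_apply]
    simp [Finset.sum_ite_eq', Fin.sum_univ_two]
  have trdef : ∀ f : Module.End k V,
      LinearMap.trace k V f = ∑ m : Fin 2, b.repr (f (b m)) m := by
    intro f
    rw [LinearMap.trace_eq_matrix_trace k b]
    simp [Matrix.trace, Matrix.diag, LinearMap.toMatrix_apply]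
  have hexp : ∀ (f : Module.End k V) (x : V), f x = ∑ t : Fin 2, b.repr x t • f (b t) := by
    intro f x
    conv_lhs => rw [← b.sum_repr x]
    rw [map_sum]
    simp
  -- main identity on pure tensors
  have H : ∀ a₁ a₂ a₃ : Module.End k V,
      h (TensorProduct.map a₁ (TensorProduct.map a₂ a₃)) =
      g (T * TensorProduct.map a₁ (TensorProduct.map a₂ a₃)) := by
    intro a₁ a₂ a₃
    have hTx : T * TensorProduct.map a₁ (TensorProduct.map a₂ a₃) =
        ∑ i : Fin 2, ∑ j : Fin 2, ∑ l : Fin 2,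
          TensorProduct.map ((E l i) * a₁) (TensorProduct.map ((E i j) * a₂) ((E j l) * a₃)) := by
      rw [hTsum]
      simp only [Finset.sum_mul]
      refine Finset.sum_congr rfl fun i _ => Finset.sum_congr rfl fun j _ =>
        Finset.sum_congr rfl fun l _ => ?_
      rw [Module.End.mul_eq_comp, Module.End.mul_eq_comp, Module.End.mul_eq_comp,
        Module.End.mul_eq_comp, ← TensorProduct.map_comp, ← TensorProduct.map_comp]
    rw [hhdef, hTx]
    rw [map_sum]
    simp only [map_sum, hgdef]
    have assoc1 : ∀ i j l : Fin 2, (E l i * a₁) * (E i j * a₂) * (E j l * a₃)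
        = E l i * (a₁ * E i j * a₂ * E j l * a₃) := by intros; simp only [mul_assoc]
    have assoc2 : ∀ i j l : Fin 2, (E j l * a₃) * (E i j * a₂) * (E l i * a₁)
        = E j l * (a₃ * E i j * a₂ * E l i * a₁) := by intros; simp only [mul_assoc]
    simp only [assoc1, assoc2, tr1]
    simp only [Module.End.mul_apply, E, LinearMap.smulRight_apply, Module.Basis.coord_apply,
      map_smul, smul_eq_mul, Finsupp.smul_apply]
    rw [trdef a₁, trdef a₂, trdef a₃, trdef (a₁ * a₂ * a₃)]
    simp only [Module.End.mul_apply]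
    conv_rhs => rw [Fin.sum_univ_two]
    conv_lhs =>
      enter [2, 2, m]
      rw [hexp a₁ (a₂ (a₃ (b m))), hexp a₂ (a₃ (b m))]
    simp only [map_smul, map_add, map_sum, Finsupp.add_apply, Finsupp.smul_apply, Finsupp.coe_finset_sum,
      Finset.sum_apply, smul_eq_mul, Fin.sum_univ_two]
    ring
  -- reduce general statement to pure tensors
  apply LinearMap.ext
  intro x
  obtain ⟨w, rfl⟩ := (homTensorHomEquiv k V (V ⊗[k] V) V (V ⊗[k] V)).surjective x
  rw [homTensorHomEquiv_apply]
  induction w using TensorProduct.induction_on with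
  | zero => simp
  | add u v hu hv => simp only [map_add, LinearMap.comp_apply, LinearMap.mulLeft_apply,
      mul_add] at hu hv ⊢; rw [hu, hv]
  | tmul a y =>
    obtain ⟨w2, rfl⟩ := (homTensorHomEquiv k V V V V).surjective y
    rw [homTensorHomEquiv_apply]
    induction w2 using TensorProduct.induction_on with
    | zero => simp
    | add u v hu hv => simp only [map_add, tmul_add, LinearMap.comp_apply,
        LinearMap.mulLeft_apply, mul_add] at hu hv ⊢; rw [hu, hv]
    | tmul a₂ a₃ =>
      rw [homTensorHomMap_apply, homTensorHomMap_apply]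
      simpa using H a a₂ a₃
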